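/- With the SINR and sum rate as defined in the context, call a tuple (w, θ^T, θ^R, β^T, β^R), where θ^T, θ^R : Fin S → ℂ and β^T, β^R : Fin S → ℝ, feasible if Σ_k ‖w_k‖² ≤ P, |θ^T_s| = 1 and |θ^R_s| = 1 for all s, 0 ≤ β^T_s, 0 ≤ β^R_s, and (β^T_s)² + (β^R_s)² ≤ 1 for all s, and let its sum rate be computed with coefficients φ^χ_s = β^χ_s · θ^χ_s. Let π₁ be a permutation of Fin S and π₂ a permutation of Fin K, and permute the problem data by ĥ_{π₁(s), π₂(k)} = h̃_{s,k} and χ̂(π₂(k)) = χ(k). If (w*, θ*ᵀ, θ*ᴿ, β*ᵀ, β*ᴿ) is feasible and its sum rate is greater than or equal to the sum rate of every feasible tuple for the channel data (h̃, χ), then the permuted tuple defined by ŵ_{π₂(k)} = w*_k, θ̂^χ_{π₁(s)} = θ*^χ_s, β̂^χ_{π₁(s)} = β*^χ_s is feasible and its sum rate is greater than or equal to the sum rate of every feasible tuple for the permuted channel data (ĥ, χ̂); moreover the two optimal sum-rate values are equal. -/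

import Mathlib

/-- Regions of a STAR-RIS: transmission (`T`) or reflection (`R`). -/
inductive Region : Type
  | T : Region
  | R : Region

/-- The STAR-RIS coefficient `φ^{χ(k)}_s` seen by user `k` at element `s`. -/
def coeff {S K : ℕ} (χ : Fin K → Region) (φT φR : Fin S → ℂ)
    (k : Fin K) (s : Fin S) : ℂ :=
  match χ k with
  | Region.T => φT s
  | Region.R => φR s

/-- SINR of user `k`. -/
noncomputable def sinr {S K Nt : ℕ}
    (h : Fin S → Fin K → EuclideanSpace ℂ (Fin Nt)) (χ : Fin K → Region)
    (φT φR : Fin S → ℂ) (w : Fin K → EuclideanSpace ℂ (Fin Nt)) (σ2 : ℝ)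
    (k : Fin K) : ℝ :=
  ‖∑ s, coeff χ φT φR k s * (inner ℂ (h s k) (w k) : ℂ)‖ ^ 2 /
    ((∑ j ∈ Finset.univ.erase k,
        ‖∑ s, coeff χ φT φR k s * (inner ℂ (h s k) (w j) : ℂ)‖ ^ 2) + σ2)

/-- System sum rate `Σ_k log₂(1 + γ_k)`. -/
noncomputable def sumRate {S K Nt : ℕ}
    (h : Fin S → Fin K → EuclideanSpace ℂ (Fin Nt)) (χ : Fin K → Region)
    (φT φR : Fin S → ℂ) (w : Fin K → EuclideanSpace ℂ (Fin Nt)) (σ2 : ℝ) : ℝ :=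
  ∑ k, Real.logb 2 (1 + sinr h χ φT φR w σ2 k)

/-- Feasibility of a tuple `(w, θT, θR, βT, βR)`: power budget, unit-modulus phase
shifts, nonnegative amplitudes and the energy-splitting constraint. -/
def Feasible {S K Nt : ℕ} (P : ℝ) (w : Fin K → EuclideanSpace ℂ (Fin Nt))
    (θT θR : Fin S → ℂ) (βT βR : Fin S → ℝ) : Prop :=
  (∑ k, ‖w k‖ ^ 2) ≤ P ∧ (∀ s, ‖θT s‖ = 1) ∧
    (∀ s, ‖θR s‖ = 1) ∧ (∀ s, 0 ≤ βT s) ∧ (∀ s, 0 ≤ βR s) ∧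
    (∀ s, (βT s) ^ 2 + (βR s) ^ 2 ≤ 1)

/-- Sum rate of a tuple, computed with the coefficients `φ^χ_s = β^χ_s · θ^χ_s`. -/
noncomputable def tupleRate {S K Nt : ℕ}
    (h : Fin S → Fin K → EuclideanSpace ℂ (Fin Nt)) (χ : Fin K → Region) (σ2 : ℝ)
    (w : Fin K → EuclideanSpace ℂ (Fin Nt)) (θT θR : Fin S → ℂ)
    (βT βR : Fin S → ℝ) : ℝ :=
  sumRate h χ (fun s => (βT s : ℂ) * θT s) (fun s => (βR s : ℂ) * θR s) w σ2


lemma sum_sq_perm {Nt K : ℕ} (π₂ : Equiv.Perm (Fin K))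
    (w2 ws : Fin K → EuclideanSpace ℂ (Fin Nt)) (hw : ∀ k, w2 (π₂ k) = ws k) :
    (∑ k, ‖w2 k‖ ^ 2) = ∑ k, ‖ws k‖ ^ 2 := by
  rw [← Equiv.sum_comp π₂ (fun k => ‖w2 k‖ ^ 2)]
  exact Finset.sum_congr rfl fun k _ => by rw [hw]

lemma sumRate_perm {S K Nt : ℕ}
    (h h2 : Fin S → Fin K → EuclideanSpace ℂ (Fin Nt)) (χ χ2 : Fin K → Region)
    (π₁ : Equiv.Perm (Fin S)) (π₂ : Equiv.Perm (Fin K))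
    (hh : ∀ s k, h2 (π₁ s) (π₂ k) = h s k)
    (hχ : ∀ k, χ2 (π₂ k) = χ k)
    (w w2 : Fin K → EuclideanSpace ℂ (Fin Nt)) (φT φR φT2 φR2 : Fin S → ℂ)
    (hw : ∀ k, w2 (π₂ k) = w k)
    (hT : ∀ s, φT2 (π₁ s) = φT s) (hR : ∀ s, φR2 (π₁ s) = φR s) (σ2 : ℝ) :
    sumRate h2 χ2 φT2 φR2 w2 σ2 = sumRate h χ φT φR w σ2 := by
  have hcoeff : ∀ k s, coeff χ2 φT2 φR2 (π₂ k) (π₁ s) = coeff χ φT φR k s := by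
    intro k s
    unfold coeff
    rw [hχ k]
    cases χ k with
    | T => exact hT s
    | R => exact hR s
  have hinner : ∀ k j, (∑ s, coeff χ2 φT2 φR2 (π₂ k) s *
      (inner ℂ (h2 s (π₂ k)) (w2 (π₂ j)) : ℂ)) =
      ∑ s, coeff χ φT φR k s * (inner ℂ (h s k) (w j) : ℂ) := by
    intro k j
    rw [← Equiv.sum_comp π₁ (fun s => coeff χ2 φT2 φR2 (π₂ k) s *
      (inner ℂ (h2 s (π₂ k)) (w2 (π₂ j)) : ℂ))]
    refine Finset.sum_congr rfl fun s _ => ?_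
    rw [hcoeff, hh, hw]
  have hsinr : ∀ k, sinr h2 χ2 φT2 φR2 w2 σ2 (π₂ k) = sinr h χ φT φR w σ2 k := by
    intro k
    unfold sinr
    congr 1
    · rw [hinner k k]
    · congr 1
      have hmap : (Finset.univ.erase k).map π₂.toEmbedding =
          Finset.univ.erase (π₂ k) := by
        ext j
        simp only [Finset.mem_map, Finset.mem_erase, Finset.mem_univ, and_true,
          Equiv.coe_toEmbedding]
        constructor
        · rintro ⟨a, ha, rfl⟩; exact fun hc => ha (π₂.injective hc)
        · rintro hj; exact ⟨π₂.symm j, fun hc => hj (by rw [← hc]; simp), by simp⟩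
      rw [← hmap, Finset.sum_map]
      exact Finset.sum_congr rfl fun j _ => by
        simp only [Equiv.coe_toEmbedding]; rw [hinner k j]
  unfold sumRate
  rw [← Equiv.sum_comp π₂ (fun k => Real.logb 2 (1 + sinr h2 χ2 φT2 φR2 w2 σ2 k))]
  exact Finset.sum_congr rfl fun k _ => by rw [hsinr]

/-- Permutation equivariance of the optimal joint active and passive beamforming
policy: permuting STAR-RIS elements and users in the channel data permutes the
optimal beamformers and STAR-RIS coefficients accordingly, and the optimal sum
rates coincide. -/
theorem optimal_policy_perm_equivariant {S K Nt : ℕ} (hK : 1 ≤ K)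
    (σ2 P : ℝ) (hσ : 0 < σ2) (hP : 0 < P)
    (h h2 : Fin S → Fin K → EuclideanSpace ℂ (Fin Nt)) (χ χ2 : Fin K → Region)
    (π₁ : Equiv.Perm (Fin S)) (π₂ : Equiv.Perm (Fin K))
    (hh : ∀ s k, h2 (π₁ s) (π₂ k) = h s k)
    (hχ : ∀ k, χ2 (π₂ k) = χ k)
    (ws : Fin K → EuclideanSpace ℂ (Fin Nt)) (θTs θRs : Fin S → ℂ)
    (βTs βRs : Fin S → ℝ)
    (hfeas : Feasible P ws θTs θRs βTs βRs)
    (hopt : ∀ (w : Fin K → EuclideanSpace ℂ (Fin Nt)) (θT θR : Fin S → ℂ)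
        (βT βR : Fin S → ℝ), Feasible P w θT θR βT βR →
        tupleRate h χ σ2 w θT θR βT βR ≤ tupleRate h χ σ2 ws θTs θRs βTs βRs)
    (w2 : Fin K → EuclideanSpace ℂ (Fin Nt)) (θT2 θR2 : Fin S → ℂ)
    (βT2 βR2 : Fin S → ℝ)
    (hw2 : ∀ k, w2 (π₂ k) = ws k)
    (hθT2 : ∀ s, θT2 (π₁ s) = θTs s) (hθR2 : ∀ s, θR2 (π₁ s) = θRs s)
    (hβT2 : ∀ s, βT2 (π₁ s) = βTs s) (hβR2 : ∀ s, βR2 (π₁ s) = βRs s) :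
    Feasible P w2 θT2 θR2 βT2 βR2 ∧
    (∀ (w : Fin K → EuclideanSpace ℂ (Fin Nt)) (θT θR : Fin S → ℂ)
        (βT βR : Fin S → ℝ), Feasible P w θT θR βT βR →
        tupleRate h2 χ2 σ2 w θT θR βT βR ≤ tupleRate h2 χ2 σ2 w2 θT2 θR2 βT2 βR2) ∧
    tupleRate h2 χ2 σ2 w2 θT2 θR2 βT2 βR2 = tupleRate h χ σ2 ws θTs θRs βTs βRs := by
  have key : ∀ (w w2 : Fin K → EuclideanSpace ℂ (Fin Nt)) (θT θR θT2 θR2 : Fin S → ℂ)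
      (βT βR βT2 βR2 : Fin S → ℝ),
      (∀ k, w2 (π₂ k) = w k) → (∀ s, θT2 (π₁ s) = θT s) → (∀ s, θR2 (π₁ s) = θR s) →
      (∀ s, βT2 (π₁ s) = βT s) → (∀ s, βR2 (π₁ s) = βR s) →
      tupleRate h2 χ2 σ2 w2 θT2 θR2 βT2 βR2 = tupleRate h χ σ2 w θT θR βT βR := by
    intro w w2 θT θR θT2 θR2 βT βR βT2 βR2 hw hT hR hbT hbR
    exact sumRate_perm h h2 χ χ2 π₁ π₂ hh hχ w w2 _ _ _ _ hw
      (fun s => by simp [hT s, hbT s]) (fun s => by simp [hR s, hbR s]) σ2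
  have hfeas2 : Feasible P w2 θT2 θR2 βT2 βR2 := by
    obtain ⟨h1, h2', h3, h4, h5, h6⟩ := hfeas
    refine ⟨by rw [sum_sq_perm π₂ w2 ws hw2]; exact h1, ?_, ?_, ?_, ?_, ?_⟩ <;>
      intro s <;> [skip; skip; skip; skip; skip] <;>
      · have := π₁.apply_symm_apply s
        first
        | (rw [← this, hθT2]; exact h2' _)
        | (rw [← this, hθR2]; exact h3 _)
        | (rw [← this, hβT2]; exact h4 _)
        | (rw [← this, hβR2]; exact h5 _)
        | (rw [← this, hβT2, hβR2]; exact h6 _)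
  refine ⟨hfeas2, ?_, key ws w2 θTs θRs θT2 θR2 βTs βRs βT2 βR2 hw2 hθT2 hθR2 hβT2 hβR2⟩
  intro w θT θR βT βR hf
  set w' : Fin K → EuclideanSpace ℂ (Fin Nt) := fun k => w (π₂ k) with hw'
  have heq : tupleRate h2 χ2 σ2 w θT θR βT βR =
      tupleRate h χ σ2 w' (fun s => θT (π₁ s)) (fun s => θR (π₁ s))
        (fun s => βT (π₁ s)) (fun s => βR (π₁ s)) :=
    key w' w (fun s => θT (π₁ s)) (fun s => θR (π₁ s)) θT θR
      (fun s => βT (π₁ s)) (fun s => βR (π₁ s)) βT βR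
      (fun k => rfl) (fun s => rfl) (fun s => rfl) (fun s => rfl) (fun s => rfl)
  have hf' : Feasible P w' (fun s => θT (π₁ s)) (fun s => θR (π₁ s))
      (fun s => βT (π₁ s)) (fun s => βR (π₁ s)) := by
    obtain ⟨h1, h2', h3, h4, h5, h6⟩ := hf
    exact ⟨by rw [← sum_sq_perm π₂ w w' (fun k => rfl)]; exact h1,
      fun s => h2' _, fun s => h3 _, fun s => h4 _, fun s => h5 _, fun s => h6 _⟩
  calc tupleRate h2 χ2 σ2 w θT θR βT βR
      = tupleRate h χ σ2 w' _ _ _ _ := heq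
    _ ≤ tupleRate h χ σ2 ws θTs θRs βTs βRs := hopt _ _ _ _ _ hf'
    _ = tupleRate h2 χ2 σ2 w2 θT2 θR2 βT2 βR2 :=
        (key ws w2 θTs θRs θT2 θR2 βTs βRs βT2 βR2 hw2 hθT2 hθR2 hβT2 hβR2).symm
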